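/- Let G be a graph of treewidth 1, let s, t ∈ V(G) be distinct vertices, and let (k,l) be a connectivity pair for s and t in G with k ≥ 0 and l ≥ 1. Then there exist k+l edge-disjoint s-t paths of which k+1 are internally disjoint. -/

import Mathlib

/-- A multigraph on vertex type `V` with edges drawn from `E`: each edge `e` in the
edge set joins the two (distinct) vertices of `ends e`.  Parallel edges are allowed,
loops are not. -/
structure Multigraph (V : Type) (E : Type) where
  edgeSet : Set E
  ends : E → Sym2 V
  no_loops : ∀ e ∈ edgeSet, ¬ (ends e).IsDiag

namespace Multigraph

variable {V E : Type}

/-- Walks in a multigraph. -/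
inductive Walk (G : Multigraph V E) : V → V → Type
  | nil (v : V) : Walk G v v
  | cons {u v w : V} (e : E) (he : e ∈ G.edgeSet) (huv : G.ends e = s(u, v))
      (p : Walk G v w) : Walk G u w

namespace Walk

variable {G : Multigraph V E}

/-- The list of vertices visited by a walk. -/
def support : {u v : V} → G.Walk u v → List V
  | u, _, .nil _ => [u]
  | u, _, .cons _ _ _ p => u :: p.support

/-- The list of edges used by a walk. -/
def edges : {u v : V} → G.Walk u v → List E
  | _, _, .nil _ => []
  | _, _, .cons e _ _ p => e :: p.edges

/-- A walk is a path if it visits no vertex twice. -/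
def IsPath {u v : V} (p : G.Walk u v) : Prop := p.support.Nodup

end Walk

/-- Two walks are edge-disjoint if they share no edge. -/
def EdgeDisjoint {G : Multigraph V E} {u₁ v₁ u₂ v₂ : V}
    (p : G.Walk u₁ v₁) (q : G.Walk u₂ v₂) : Prop :=
  ∀ e, e ∈ p.edges → e ∉ q.edges

/-- Two `s`-`t` walks are internally disjoint if they share no vertices other
than `s` and `t`. -/
def InternallyDisjoint {G : Multigraph V E} {s t : V}
    (p q : G.Walk s t) : Prop :=
  ∀ v, v ∈ p.support → v ∈ q.support → v = s ∨ v = t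


/-- `(W, F)` is an `s`-`t` disconnecting pair: `W` is a set of vertices avoiding `s`
and `t`, `F` is a set of edges of `G`, and `G - W - F` contains no `s`-`t` path. -/
def DisconnectingPair (G : Multigraph V E) (s t : V) (W : Finset V) (F : Finset E) : Prop :=
  (↑W : Set V) ⊆ ({s, t} : Set V)ᶜ ∧ (↑F : Set E) ⊆ G.edgeSet ∧
    ∀ p : G.Walk s t, (∃ x ∈ p.support, x ∈ W) ∨ ∃ e ∈ p.edges, e ∈ F

/-- `(k, l)` is a connectivity pair for `s` and `t` in `G`: there is an `s`-`t`
disconnecting pair of order `k` and size `l`, but none of cardinality less than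
`k + l` having order at most `k` and size at most `l`. -/
def ConnectivityPair (G : Multigraph V E) (s t : V) (k l : ℕ) : Prop :=
  (∃ (W : Finset V) (F : Finset E), G.DisconnectingPair s t W F ∧ W.card = k ∧ F.card = l) ∧
    ¬ ∃ (W : Finset V) (F : Finset E), G.DisconnectingPair s t W F ∧
        W.card + F.card < k + l ∧ W.card ≤ k ∧ F.card ≤ l

/-- There are `k + l` pairwise edge-disjoint `s`-`t` paths in `G` of which `k + 1`
are pairwise internally disjoint. -/
def HasGoodPaths (G : Multigraph V E) (s t : V) (k l : ℕ) : Prop :=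
  ∃ P : Fin (k + l) → G.Walk s t,
    (∀ i, (P i).IsPath) ∧
    (∀ i j, i ≠ j → EdgeDisjoint (P i) (P j)) ∧
    ∃ S : Finset (Fin (k + l)), S.card = k + 1 ∧
      ∀ i ∈ S, ∀ j ∈ S, i ≠ j → InternallyDisjoint (P i) (P j)

/-- A tree decomposition of the multigraph `G` with host tree `T`. -/
structure TreeDecomp (G : Multigraph V E) {ι : Type} (T : SimpleGraph ι) where
  isTree : T.IsTree
  bags : ι → Set V
  covers_vertex : ∀ v : V, ∃ i, v ∈ bags i
  covers_edge : ∀ e ∈ G.edgeSet, ∃ i, ∀ v ∈ G.ends e, v ∈ bags i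
  subtree : ∀ (v : V) (i j : ι), v ∈ bags i → v ∈ bags j →
    ∀ p : T.Walk i j, p.IsPath → ∀ x ∈ p.support, v ∈ bags x

/-- Every bag of the tree decomposition has at most `k + 1` vertices. -/
def TreeDecomp.WidthLE {G : Multigraph V E} {ι : Type} {T : SimpleGraph ι}
    (D : TreeDecomp G T) (k : ℕ) : Prop :=
  ∀ i, (D.bags i).Finite ∧ (D.bags i).ncard ≤ k + 1

/-- `G` has treewidth at most `k`: it admits a tree decomposition of width at most `k`. -/
def TreewidthLE (G : Multigraph V E) (k : ℕ) : Prop :=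
  ∃ (ι : Type) (T : SimpleGraph ι) (D : TreeDecomp G T), D.WidthLE k

end Multigraph
open SimpleGraph

section TreeLemmas
variable {ι : Type} [DecidableEq ι] {T : SimpleGraph ι}

noncomputable def geo (hT : T.IsTree) (a b : ι) : T.Walk a b :=
  (hT.isConnected.preconnected a b).some.bypass

lemma geo_isPath (hT : T.IsTree) (a b : ι) : (geo hT a b).IsPath :=
  SimpleGraph.Walk.bypass_isPath _

lemma eq_geo (hT : T.IsTree) {a b : ι} (w : T.Walk a b) (hw : w.IsPath) : w = geo hT a b := by
  have := hT.2.path_unique ⟨w, hw⟩ ⟨geo hT a b, geo_isPath hT a b⟩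
  exact congrArg Subtype.val this

lemma geo_triangle (hT : T.IsTree) (a b c : ι) :
    ∀ x ∈ (geo hT a c).support, x ∈ (geo hT a b).support ∨ x ∈ (geo hT b c).support := by
  have h1 : ((geo hT a b).append (geo hT b c)).bypass = geo hT a c :=
    eq_geo hT _ (SimpleGraph.Walk.bypass_isPath _)
  intro x hx
  rw [← h1] at hx
  have h2 := SimpleGraph.Walk.support_bypass_subset _ hx
  rw [SimpleGraph.Walk.support_append] at h2
  rcases List.mem_append.mp h2 with h | h
  · exact Or.inl h
  · exact Or.inr (List.tail_subset _ h)

lemma first_hit {x y : ι} (w : T.Walk x y) (S : Set ι) (hy : y ∈ S) :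
    ∃ (μ : ι) (w1 : T.Walk x μ), μ ∈ S ∧ (∀ z ∈ w1.support, z ∈ S → z = μ) ∧
      (∀ z ∈ w1.support, z ∈ w.support) ∧ (w.IsPath → w1.IsPath) := by
  induction w with
  | nil =>
    refine ⟨_, .nil, hy, ?_, ?_, fun _ => SimpleGraph.Walk.IsPath.nil⟩
    · intro z hz _; simpa using hz
    · intro z hz; exact hz
  | @cons u v z h p ih =>
    by_cases hu : u ∈ S
    · refine ⟨u, .nil, hu, ?_, ?_, fun _ => SimpleGraph.Walk.IsPath.nil⟩
      · intro t ht _; simpa using ht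
      · intro t ht; simp at ht; simp [ht]
    · obtain ⟨μ, w1, h1, h2, h3, h4⟩ := ih hy
      refine ⟨μ, SimpleGraph.Walk.cons h w1, h1, ?_, ?_, ?_⟩
      · intro t ht hts
        rw [SimpleGraph.Walk.support_cons, List.mem_cons] at ht
        rcases ht with rfl | ht
        · exact absurd hts hu
        · exact h2 t ht hts
      · intro t ht
        rw [SimpleGraph.Walk.support_cons, List.mem_cons] at ht
        rcases ht with rfl | ht
        · simp
        · exact List.mem_cons_of_mem _ (h3 t ht)
      · intro hp
        rw [SimpleGraph.Walk.cons_isPath_iff] at hp ⊢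
        refine ⟨h4 hp.1, fun hc => hp.2 (h3 u hc)⟩

lemma median (hT : T.IsTree) (a b c : ι) :
    ∃ μ, μ ∈ (geo hT a b).support ∧ μ ∈ (geo hT b c).support ∧ μ ∈ (geo hT a c).support := by
  classical
  set p := geo hT a b with hp
  set r := geo hT a c with hr
  obtain ⟨μ, w1, hμp, hfirst, hsub, hpath⟩ :=
    first_hit r.reverse {z | z ∈ p.support} (by simp)
  have hw1path : w1.IsPath := hpath ((geo_isPath hT a c).reverse)
  have hμp' : μ ∈ p.support := hμp
  have hp2path : (p.dropUntil μ hμp').IsPath := (geo_isPath hT a b).dropUntil hμp'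
  have hnodup : ((p.dropUntil μ hμp').reverse.append w1.reverse).support.Nodup := by
    rw [SimpleGraph.Walk.support_append]
    have hn1 : (p.dropUntil μ hμp').reverse.support.Nodup := hp2path.reverse.support_nodup
    have hn2 : w1.reverse.support.tail.Nodup := (hw1path.reverse.support_nodup).tail
    refine List.Nodup.append hn1 hn2 ?_
    intro t ht1 ht2
    have ht1' : t ∈ (p.dropUntil μ hμp').support := by
      rwa [SimpleGraph.Walk.support_reverse, List.mem_reverse] at ht1
    have htw1 : t ∈ w1.support := by
      have := List.tail_subset _ ht2
      rwa [SimpleGraph.Walk.support_reverse, List.mem_reverse] at this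
    have htp : t ∈ p.support := SimpleGraph.Walk.support_dropUntil_subset _ _ ht1'
    have heq : t = μ := hfirst t htw1 htp
    rw [heq] at ht2
    have hcons : w1.reverse.support = μ :: w1.reverse.support.tail :=
      SimpleGraph.Walk.support_eq_cons _
    have hnd := hw1path.reverse.support_nodup
    rw [hcons] at hnd
    exact (List.nodup_cons.mp hnd).1 ht2
  have hwpath : ((p.dropUntil μ hμp').reverse.append w1.reverse).IsPath :=
    SimpleGraph.Walk.IsPath.mk' hnodup
  have hweq : (p.dropUntil μ hμp').reverse.append w1.reverse = geo hT b c :=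
    eq_geo hT _ hwpath
  refine ⟨μ, hμp', ?_, ?_⟩
  · rw [← hweq, SimpleGraph.Walk.mem_support_append_iff]
    left
    rw [SimpleGraph.Walk.support_reverse, List.mem_reverse]
    exact SimpleGraph.Walk.start_mem_support _
  · have := hsub μ (SimpleGraph.Walk.end_mem_support w1)
    rwa [SimpleGraph.Walk.support_reverse, List.mem_reverse] at this

lemma geo_chain (hT : T.IsTree) (f : ℕ → ι) :
    ∀ d, 1 ≤ d → ∀ x ∈ (geo hT (f 0) (f d)).support,
      ∃ i, i < d ∧ x ∈ (geo hT (f i) (f (i + 1))).support := by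
  intro d
  induction d with
  | zero => omega
  | succ d ih =>
    intro _ x hx
    rcases Nat.eq_or_lt_of_le (Nat.one_le_iff_ne_zero.mpr (by omega : d + 1 ≠ 0)) with h1 | h1
    · refine ⟨0, by omega, ?_⟩
      rw [← h1] at hx
      simpa using hx
    · have hd : 1 ≤ d := by omega
      rcases geo_triangle hT (f 0) (f d) (f (d + 1)) x hx with h | h
      · obtain ⟨i, hi, hxi⟩ := ih hd x h
        exact ⟨i, by omega, hxi⟩
      · exact ⟨d, by omega, h⟩

end TreeLemmas

namespace Multigraph

section MGLemmas

variable {V E : Type} {G : Multigraph V E}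

namespace Walk

lemma edges_mem : ∀ {u v : V} (p : G.Walk u v), ∀ e ∈ p.edges, e ∈ G.edgeSet
  | _, _, .nil _ => by simp [edges]
  | _, _, .cons e he huv p => by
    intro f hf
    rcases List.mem_cons.mp hf with rfl | hf
    · exact he
    · exact edges_mem p f hf

lemma start_mem_support {u v : V} (p : G.Walk u v) : u ∈ p.support := by
  cases p <;> simp [support]

lemma end_mem_support : ∀ {u v : V} (p : G.Walk u v), v ∈ p.support
  | _, _, .nil _ => by simp [support]
  | _, _, .cons e he huv p => by simp [support, end_mem_support p]

lemma mem_ends_mem_support : ∀ {u v : V} (p : G.Walk u v), ∀ e ∈ p.edges,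
    ∀ z ∈ G.ends e, z ∈ p.support
  | _, _, .nil _ => by simp [edges]
  | u, w, .cons e he huv p => by
    intro f hf z hz
    rcases List.mem_cons.mp hf with rfl | hf
    · rw [huv, Sym2.mem_iff] at hz
      rcases hz with rfl | rfl
      · exact List.mem_cons_self
      · exact List.mem_cons_of_mem _ (start_mem_support p)
    · exact List.mem_cons_of_mem _ (mem_ends_mem_support p f hf z hz)

lemma isPath_cons {u x w : V} {e : E} {he : e ∈ G.edgeSet} {huv : G.ends e = s(u, x)}
    {p : G.Walk x w} (hp : (Walk.cons e he huv p).IsPath) : p.IsPath ∧ u ∉ p.support := by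
  have : (u :: p.support).Nodup := hp
  exact ⟨(List.nodup_cons.mp this).2, (List.nodup_cons.mp this).1⟩

lemma exists_suffix : ∀ {u v : V} (p : G.Walk u v) (x : V), x ∈ p.support →
    ∃ q : G.Walk x v, (∀ e ∈ q.edges, e ∈ p.edges) ∧ (∀ z ∈ q.support, z ∈ p.support) ∧
      (p.IsPath → q.IsPath)
  | _, _, .nil v, x, hx => by
    simp [support] at hx
    subst hx
    exact ⟨.nil _, by simp [edges], by simp, fun h => h⟩
  | u, w, .cons e he huv p, x, hx => by
    rcases List.mem_cons.mp hx with rfl | hx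
    · exact ⟨.cons e he huv p, fun _ h => h, fun _ h => h, fun h => h⟩
    · obtain ⟨q, h1, h2, h3⟩ := exists_suffix p x hx
      exact ⟨q, fun f hf => List.mem_cons_of_mem _ (h1 f hf),
        fun z hz => List.mem_cons_of_mem _ (h2 z hz),
        fun hp => h3 (isPath_cons hp).1⟩

lemma exists_isPath : ∀ {u v : V} (p : G.Walk u v),
    ∃ q : G.Walk u v, q.IsPath ∧ (∀ e ∈ q.edges, e ∈ p.edges) ∧ (∀ z ∈ q.support, z ∈ p.support)
  | _, _, .nil v => ⟨.nil v, by simp [IsPath, support], by simp, fun z hz => hz⟩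
  | u, w, .cons e he huv p => by
    obtain ⟨q, hq, hqe, hqs⟩ := exists_isPath p
    by_cases hu : u ∈ q.support
    · obtain ⟨r, h1, h2, h3⟩ := exists_suffix q u hu
      exact ⟨r, h3 hq, fun f hf => List.mem_cons_of_mem _ (hqe f (h1 f hf)),
        fun z hz => List.mem_cons_of_mem _ (hqs z (h2 z hz))⟩
    · refine ⟨.cons e he huv q, ?_, ?_, ?_⟩
      · exact List.nodup_cons.mpr ⟨hu, hq⟩
      · intro f hf
        rcases List.mem_cons.mp hf with rfl | hf
        · exact List.mem_cons_self
        · exact List.mem_cons_of_mem _ (hqe f hf)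
      · intro z hz
        rcases List.mem_cons.mp hz with rfl | hz
        · exact List.mem_cons_self
        · exact List.mem_cons_of_mem _ (hqs z hz)

lemma edges_eq_of_ends_eq : ∀ {u v : V} (p : G.Walk u v), p.IsPath →
    ∀ e1 ∈ p.edges, ∀ e2 ∈ p.edges, G.ends e1 = G.ends e2 → e1 = e2
  | _, _, .nil _ => by simp [edges]
  | u, w, .cons e he huv p => by
    intro hp e1 h1 e2 h2 hee
    have hp' := isPath_cons hp
    have key : ∀ f ∈ p.edges, G.ends f ≠ G.ends e := by
      intro f hf hc
      have : u ∈ p.support := mem_ends_mem_support p f hf u (by rw [hc, huv]; simp)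
      exact hp'.2 this
    rcases List.mem_cons.mp h1 with rfl | h1'
    · rcases List.mem_cons.mp h2 with rfl | h2'
      · rfl
      · exact absurd hee.symm (key e2 h2')
    · rcases List.mem_cons.mp h2 with rfl | h2'
      · exact absurd hee (key e1 h1')
      · exact edges_eq_of_ends_eq p hp'.1 e1 h1' e2 h2' hee

def rebuild (f : E → E) (hf : ∀ e ∈ G.edgeSet, f e ∈ G.edgeSet ∧ G.ends (f e) = G.ends e) :
    ∀ {u v : V}, G.Walk u v → G.Walk u v
  | _, _, .nil v => .nil v
  | _, _, .cons e he huv p =>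
    .cons (f e) (hf e he).1 (by rw [(hf e he).2]; exact huv) (rebuild f hf p)

lemma support_rebuild (f : E → E) (hf : ∀ e ∈ G.edgeSet, f e ∈ G.edgeSet ∧ G.ends (f e) = G.ends e) :
    ∀ {u v : V} (p : G.Walk u v), (rebuild f hf p).support = p.support
  | _, _, .nil v => rfl
  | _, _, .cons e he huv p => by
    simp only [rebuild, support, support_rebuild f hf p]

lemma edges_rebuild (f : E → E) (hf : ∀ e ∈ G.edgeSet, f e ∈ G.edgeSet ∧ G.ends (f e) = G.ends e) :
    ∀ {u v : V} (p : G.Walk u v), (rebuild f hf p).edges = p.edges.map f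
  | _, _, .nil v => rfl
  | _, _, .cons e he huv p => by
    simp only [rebuild, edges, edges_rebuild f hf p, List.map_cons]

end Walk

/-- The underlying simple graph of a multigraph. -/
def simpleOf (G : Multigraph V E) : SimpleGraph V where
  Adj u v := u ≠ v ∧ ∃ e ∈ G.edgeSet, G.ends e = s(u, v)
  symm := ⟨by
    rintro u v ⟨hne, e, he, hends⟩
    exact ⟨hne.symm, e, he, by rwa [Sym2.eq_swap] at hends⟩⟩
  loopless := ⟨fun u h => h.1 rfl⟩

namespace Walk

def toSimple : ∀ {u v : V}, G.Walk u v → G.simpleOf.Walk u v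
  | _, _, .nil v => SimpleGraph.Walk.nil
  | u, w, .cons e he huv p =>
    SimpleGraph.Walk.cons
      ⟨fun hc => G.no_loops e he (by rw [huv, ← hc]; exact Sym2.isDiag_iff_proj_eq |>.mpr rfl),
        e, he, huv⟩ p.toSimple

lemma support_toSimple : ∀ {u v : V} (p : G.Walk u v), p.toSimple.support = p.support
  | _, _, .nil v => rfl
  | _, _, .cons e he huv p => by
    simp only [toSimple, SimpleGraph.Walk.support_cons, support, support_toSimple p]
    exact congrArg (List.cons _) (support_toSimple p)

lemma ends_mem_toSimple_edges : ∀ {u v : V} (p : G.Walk u v), ∀ e ∈ p.edges,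
    G.ends e ∈ p.toSimple.edges
  | _, _, .nil _ => by simp [edges]
  | u, w, .cons e he huv p => by
    intro f hf
    rcases List.mem_cons.mp hf with rfl | hf
    · simp only [toSimple, SimpleGraph.Walk.edges_cons, huv]
      exact List.mem_cons_self
    · simp only [toSimple, SimpleGraph.Walk.edges_cons]
      exact List.mem_cons_of_mem _ (ends_mem_toSimple_edges p f hf)

lemma toSimple_edges_spec : ∀ {u v : V} (p : G.Walk u v), ∀ d ∈ p.toSimple.edges,
    ∃ e ∈ p.edges, G.ends e = d
  | _, _, .nil _ => by simp [toSimple]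
  | u, w, .cons e he huv p => by
    intro d hd
    simp only [toSimple, SimpleGraph.Walk.edges_cons] at hd
    rcases List.mem_cons.mp hd with rfl | hd
    · exact ⟨e, List.mem_cons_self, huv⟩
    · obtain ⟨f, hf, hff⟩ := toSimple_edges_spec p d hd
      exact ⟨f, List.mem_cons_of_mem _ hf, hff⟩

lemma isPath_toSimple {u v : V} (p : G.Walk u v) (hp : p.IsPath) : p.toSimple.IsPath :=
  SimpleGraph.Walk.IsPath.mk' (by rw [support_toSimple]; exact hp)

end Walk

end MGLemmas

end Multigraph

namespace Multigraph

variable {V E : Type} {G : Multigraph V E}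

lemma core {ι : Type} {T : SimpleGraph ι} (D : G.TreeDecomp T) (hw : D.WidthLE 1)
    (m : ℕ) (hm : 2 ≤ m) (v : ℕ → V) (c : ℕ → ι)
    (hdist : ∀ i ≤ m, ∀ j ≤ m, i ≠ j → v i ≠ v j)
    (hbag : ∀ i < m, v i ∈ D.bags (c i) ∧ v (i + 1) ∈ D.bags (c i))
    (hlast : v m ∈ D.bags (c m) ∧ v 0 ∈ D.bags (c m)) : False := by
  classical
  have hT := D.isTree
  have hsub : ∀ (x : V) (i j : ι), x ∈ D.bags i → x ∈ D.bags j →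
      ∀ n ∈ (geo hT i j).support, x ∈ D.bags n :=
    fun x i j hi hj => D.subtree x i j hi hj (geo hT i j) (geo_isPath hT i j)
  obtain ⟨μ, h1, h2, h3⟩ := median hT (c 0) (c 1) (c m)
  have hv1 : v 1 ∈ D.bags μ :=
    hsub (v 1) (c 0) (c 1) (hbag 0 (by omega)).2 (hbag 1 (by omega)).1 μ h1
  have hv0 : v 0 ∈ D.bags μ :=
    hsub (v 0) (c 0) (c m) (hbag 0 (by omega)).1 hlast.2 μ h3
  have hm1 : m - 1 + 1 = m := by omega
  obtain ⟨i, hi, hμi⟩ := geo_chain hT (fun i => c (i + 1)) (m - 1) (by omega) μ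
    (by show μ ∈ (geo hT (c (0 + 1)) (c (m - 1 + 1))).support; rw [hm1]; exact h2)
  have hvj : v (i + 2) ∈ D.bags μ := by
    refine hsub (v (i + 2)) (c (i + 1)) (c (i + 2)) (hbag (i + 1) (by omega)).2 ?_ μ hμi
    rcases Nat.lt_or_ge (i + 2) m with hlt | hge
    · exact (hbag (i + 2) hlt).1
    · have : i + 2 = m := by omega
      rw [this]; exact hlast.1
  have hsubset : ({v 0, v 1, v (i + 2)} : Set V) ⊆ D.bags μ := by
    intro x hx
    rcases hx with rfl | rfl | rfl <;> assumption
  have hle : ({v 0, v 1, v (i + 2)} : Set V).ncard ≤ 2 :=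
    le_trans (Set.ncard_le_ncard hsubset (hw μ).1) (hw μ).2
  have hd1 : v 0 ≠ v 1 := hdist 0 (by omega) 1 (by omega) (by omega)
  have hd2 : v 0 ≠ v (i + 2) := hdist 0 (by omega) (i + 2) (by omega) (by omega)
  have hd3 : v 1 ≠ v (i + 2) := hdist 1 (by omega) (i + 2) (by omega) (by omega)
  have h3card : ({v 0, v 1, v (i + 2)} : Set V).ncard = 3 := by
    rw [Set.ncard_insert_of_notMem (by simp [hd1, hd2]),
      Set.ncard_insert_of_notMem (by simp [hd3]), Set.ncard_singleton]
  omega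

lemma simple_acyclic {ι : Type} {T : SimpleGraph ι} (D : G.TreeDecomp T) (hw : D.WidthLE 1) :
    G.simpleOf.IsAcyclic := by
  classical
  intro u c hc
  set L := c.support with hL
  have hlen : L.length = c.length + 1 := SimpleGraph.Walk.length_support c
  have h3 : 3 ≤ c.length := hc.three_le_length
  set n := c.length with hn
  set vf : ℕ → V := fun i => L.getD i u with hvf
  have htail : L = u :: L.tail := SimpleGraph.Walk.support_eq_cons c
  have htaillen : L.tail.length = n := by
    rw [htail] at hlen; simpa using hlen
  have htailnodup : L.tail.Nodup := hc.support_nodup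
  have hvf0 : vf 0 = u := by rw [hvf]; rw [htail]; rfl
  have hvftail : ∀ i, 1 ≤ i → vf i = L.tail.getD (i - 1) u := by
    intro i hi
    rw [hvf]
    conv_lhs => rw [htail]
    obtain ⟨i', rfl⟩ : ∃ i', i = i' + 1 := ⟨i - 1, by omega⟩
    simp
  have hvfn : vf n = u := by
    have hgl : L.getLast (by rw [htail]; simp) = u := SimpleGraph.Walk.getLast_support c
    rw [List.getLast_eq_getElem] at hgl
    show L.getD n u = u
    rw [List.getD_eq_getElem L u (show n < L.length by omega)]
    have hidx : L[n] = L[L.length - 1] := by congr 1; omega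
    rw [hidx]; exact hgl
  -- distinctness on [0, n-1]
  have hdist : ∀ i ≤ n - 1, ∀ j ≤ n - 1, i ≠ j → vf i ≠ vf j := by
    have key : ∀ i j, 1 ≤ i → i ≤ n → 1 ≤ j → j ≤ n → vf i = vf j → i = j := by
      intro i j hi1 hin hj1 hjn heq
      rw [hvftail i hi1, hvftail j hj1] at heq
      rw [List.getD_eq_getElem _ u (show i - 1 < L.tail.length by omega),
        List.getD_eq_getElem _ u (show j - 1 < L.tail.length by omega)] at heq
      have := (List.Nodup.getElem_inj_iff htailnodup).mp heq
      omega
    intro i hi j hj hij heq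
    rcases Nat.eq_zero_or_pos i with rfl | hipos
    · rcases Nat.eq_zero_or_pos j with rfl | hjpos
      · omega
      · rw [hvf0, ← hvfn] at heq
        have := key n j (by omega) le_rfl hjpos (by omega) heq
        omega
    · rcases Nat.eq_zero_or_pos j with rfl | hjpos
      · rw [hvf0, ← hvfn] at heq
        have := key i n hipos (by omega) (by omega) le_rfl heq
        omega
      · have := key i j hipos (by omega) hjpos (by omega) heq
        omega
  -- adjacency
  have hchain : List.Chain' G.simpleOf.Adj L := SimpleGraph.Walk.isChain_adj_support c
  have hadj : ∀ i < n, G.simpleOf.Adj (vf i) (vf (i + 1)) := by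
    intro i hi
    have h := List.isChain_iff_getElem.mp hchain i (by omega)
    show G.simpleOf.Adj (L.getD i u) (L.getD (i + 1) u)
    rw [List.getD_eq_getElem L u (show i < L.length by omega),
      List.getD_eq_getElem L u (show i + 1 < L.length by omega)]
    simpa using h
  -- bags for adjacent pairs
  have hex : ∀ i < n, ∃ node, vf i ∈ D.bags node ∧ vf (i + 1) ∈ D.bags node := by
    intro i hi
    obtain ⟨hne, e, he, hends⟩ := hadj i hi
    obtain ⟨node, hnode⟩ := D.covers_edge e he
    exact ⟨node, hnode _ (by rw [hends]; exact Sym2.mem_mk_left _ _),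
      hnode _ (by rw [hends]; exact Sym2.mem_mk_right _ _)⟩
  have hnonempty : 0 < n := by omega
  set cf : ℕ → ι := fun i => if h : i < n then (hex i h).choose else (hex 0 hnonempty).choose
    with hcf
  refine core D hw (n - 1) (by omega) vf cf hdist ?_ ?_
  · intro i hi
    have h : i < n := by omega
    have := (hex i h).choose_spec
    rw [hcf]; simp only [dif_pos h]
    exact this
  · have h : n - 1 < n := by omega
    have hspec := (hex (n - 1) h).choose_spec
    rw [hcf]; simp only [dif_pos h]
    have hco : n - 1 + 1 = n := by omega
    refine ⟨hspec.1, ?_⟩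
    have hveq : vf 0 = vf (n - 1 + 1) := by rw [hco, hvf0, ← hvfn]
    rw [hveq]
    exact hspec.2

end Multigraph

namespace Multigraph

variable {V E : Type} {G : Multigraph V E}

lemma exists_direct_edge : ∀ {u v : V} (p : G.Walk u v), p.IsPath → u ≠ v →
    (∀ x ∈ p.support, x = u ∨ x = v) → ∃ e ∈ p.edges, G.ends e = s(u, v)
  | _, _, .nil _, _, hne, _ => absurd rfl hne
  | u, w, .cons (v := x) e he huv p', hp, hne, hsup => by
    have hx : x ∈ p'.support := Walk.start_mem_support p'
    have hxu : x ≠ u := by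
      intro hxu
      exact (Walk.isPath_cons hp).2 (hxu ▸ hx)
    have hxw : x = w := by
      rcases hsup x (List.mem_cons_of_mem _ hx) with h | h
      · exact absurd h hxu
      · exact h
    subst hxw
    exact ⟨e, List.mem_cons_self, huv⟩

end Multigraph

open Multigraph in
/-- Beineke–Harary for graphs of treewidth `1`. -/
theorem beineke_harary_tw1 {V E : Type} (G : Multigraph V E)
    (htw : G.TreewidthLE 1) (htw' : ¬ G.TreewidthLE 0) (s t : V) (hst : s ≠ t)
    (k l : ℕ) (hl : 1 ≤ l) (h : G.ConnectivityPair s t k l) :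
    HasGoodPaths G s t k l := by
  classical
  obtain ⟨ι, T, D, hw⟩ := htw
  have hA : G.simpleOf.IsAcyclic := Multigraph.simple_acyclic D hw
  have hwalk : Nonempty (G.Walk s t) := by
    by_contra hne
    exact h.2 ⟨∅, ∅, ⟨by simp, by simp, fun p => (hne ⟨p⟩).elim⟩,
      by simp only [Finset.card_empty]; omega, by simp, by simp⟩
  obtain ⟨p0⟩ := hwalk
  obtain ⟨p, hpPath, hpe, hps⟩ := Multigraph.Walk.exists_isPath p0
  have huniq : ∀ q : G.Walk s t, q.toSimple.bypass = p.toSimple := by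
    intro q
    have h1 : (⟨q.toSimple.bypass, SimpleGraph.Walk.bypass_isPath _⟩ : G.simpleOf.Path s t) =
        ⟨p.toSimple, Multigraph.Walk.isPath_toSimple p hpPath⟩ := hA.path_unique _ _
    exact congrArg Subtype.val h1
  have hbridge : ∀ f ∈ p.edges, ∀ q : G.Walk s t, ∃ e' ∈ q.edges, G.ends e' = G.ends f := by
    intro f hf q
    by_contra hno
    push_neg at hno
    have h1 : G.ends f ∈ p.toSimple.edges := Multigraph.Walk.ends_mem_toSimple_edges p f hf
    rw [← huniq q] at h1
    have h2 := SimpleGraph.Walk.edges_bypass_subset _ h1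
    obtain ⟨e', he', hee⟩ := Multigraph.Walk.toSimple_edges_spec q _ h2
    exact hno e' he' hee
  have hvpass : ∀ x ∈ p.support, ∀ q : G.Walk s t, x ∈ q.support := by
    intro x hx q
    have h1 : x ∈ p.toSimple.support := by
      rw [Multigraph.Walk.support_toSimple]; exact hx
    rw [← huniq q] at h1
    have h2 := SimpleGraph.Walk.support_bypass_subset _ h1
    rwa [Multigraph.Walk.support_toSimple] at h2
  have hk0 : k = 0 := by
    by_contra hk
    have hk1 : 1 ≤ k := Nat.one_le_iff_ne_zero.mpr hk
    obtain ⟨W, F, hWF, hcW, hcF⟩ := h.1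
    by_cases hint : ∃ x ∈ p.support, x ≠ s ∧ x ≠ t
    · obtain ⟨x, hx, hxs, hxt⟩ := hint
      refine h.2 ⟨{x}, ∅, ⟨?_, by simp, fun q => Or.inl ⟨x, hvpass x hx q, by simp⟩⟩,
        ?_, ?_, by simp⟩
      · intro y hy
        simp only [Finset.coe_singleton, Set.mem_singleton_iff] at hy
        subst hy
        simp [hxs, hxt]
      · simp only [Finset.card_singleton, Finset.card_empty]; omega
      · simpa using hk1
    · push_neg at hint
      have hsup : ∀ x ∈ p.support, x = s ∨ x = t := by
        intro x hx
        by_cases hxs : x = s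
        · exact Or.inl hxs
        · exact Or.inr (hint x hx hxs)
      obtain ⟨e, hep, hends⟩ := Multigraph.exists_direct_edge p hpPath hst hsup
      set Z : Set E := {e' | e' ∈ G.edgeSet ∧ G.ends e' = s(s, t)} with hZ
      have hZF : ∀ e' ∈ Z, e' ∈ F := by
        intro e' he'
        have hq := hWF.2.2 (Multigraph.Walk.cons e' he'.1 he'.2 (.nil t))
        rcases hq with ⟨x, hxsup, hxW⟩ | ⟨e'', he''q, he''F⟩
        · exfalso
          have hxc : x ∈ (({s, t} : Set V)ᶜ) := hWF.1 (by exact_mod_cast hxW)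
          simp only [Multigraph.Walk.support] at hxsup
          simp only [List.mem_cons, List.mem_singleton, List.not_mem_nil, or_false] at hxsup
          rcases hxsup with rfl | rfl <;> simp at hxc
        · simp only [Multigraph.Walk.edges, List.mem_singleton, List.not_mem_nil,
            or_false, List.mem_cons] at he''q
          subst he''q
          exact he''F
      have hZfin : Z.Finite := F.finite_toSet.subset hZF
      have hcard : hZfin.toFinset.card ≤ F.card := Finset.card_le_card (by
        intro e' he'
        rw [Set.Finite.mem_toFinset] at he'
        exact hZF e' he')
      refine h.2 ⟨∅, hZfin.toFinset, ⟨by simp, ?_, ?_⟩, ?_, by simp, by omega⟩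
      · rw [Set.Finite.coe_toFinset]
        exact fun e' he' => he'.1
      · intro q
        right
        obtain ⟨e', he'q, hee⟩ := hbridge e hep q
        refine ⟨e', he'q, ?_⟩
        rw [Set.Finite.mem_toFinset]
        exact ⟨Multigraph.Walk.edges_mem q e' he'q, by rw [hee, hends]⟩
      · simp only [Finset.card_empty]
        omega
  subst hk0
  -- counting: each parallel class of a path edge carries at least l edges
  have hgood : ∀ f ∈ p.edges, ∃ tset : Set E,
      tset ⊆ {e' | e' ∈ G.edgeSet ∧ G.ends e' = G.ends f} ∧ tset.Finite ∧ tset.ncard = l := by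
    intro f hf
    set A : Set E := {e' | e' ∈ G.edgeSet ∧ G.ends e' = G.ends f} with hAdef
    by_cases hInf : A.Infinite
    · exact hInf.exists_subset_ncard_eq l
    · rw [Set.not_infinite] at hInf
      rcases le_or_gt l A.ncard with hle | hlt
      · obtain ⟨t', ht1, ht2⟩ := Set.exists_subset_card_eq hle
        exact ⟨t', ht1, hInf.subset ht1, ht2⟩
      · exfalso
        have hcc : hInf.toFinset.card = A.ncard := (Set.ncard_eq_toFinset_card _ hInf).symm
        refine h.2 ⟨∅, hInf.toFinset, ⟨by simp, ?_, ?_⟩, ?_, by simp, by omega⟩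
        · rw [Set.Finite.coe_toFinset]
          exact fun e' he' => he'.1
        · intro q
          right
          obtain ⟨e', he'q, hee⟩ := hbridge f hf q
          exact ⟨e', he'q, by
            rw [Set.Finite.mem_toFinset]
            exact ⟨Multigraph.Walk.edges_mem q e' he'q, hee⟩⟩
        · simp only [Finset.card_empty]
          omega
  have hsel : ∃ sel : E → Fin l → E,
      (∀ e ∈ G.edgeSet, ∀ j, sel e j ∈ G.edgeSet ∧ G.ends (sel e j) = G.ends e) ∧
      (∀ f ∈ p.edges, Function.Injective (sel f)) := by
    have hchoice : ∀ f : E, ∃ g : Fin l → E,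
        (f ∈ G.edgeSet → ∀ j, g j ∈ G.edgeSet ∧ G.ends (g j) = G.ends f) ∧
        (f ∈ p.edges → Function.Injective g) := by
      intro f
      by_cases hf : f ∈ p.edges
      · obtain ⟨tset, ht1, ht2, ht3⟩ := hgood f hf
        have hcard : ht2.toFinset.card = l := by
          rw [← Set.ncard_eq_toFinset_card _ ht2]; exact ht3
        set eqv := ht2.toFinset.equivFin with heqv
        refine ⟨fun j => (eqv.symm (Fin.cast hcard.symm j) : E), ?_, ?_⟩
        · intro _ j
          have hmem := (eqv.symm (Fin.cast hcard.symm j)).2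
          rw [Set.Finite.mem_toFinset] at hmem
          exact ⟨(ht1 hmem).1, (ht1 hmem).2⟩
        · intro _ j1 j2 hj
          have h1 : eqv.symm (Fin.cast hcard.symm j1) = eqv.symm (Fin.cast hcard.symm j2) :=
            Subtype.ext hj
          have h2 := eqv.symm.injective h1
          have h3 := congrArg Fin.val h2
          simp only [Fin.coe_cast] at h3
          exact Fin.ext h3
      · exact ⟨fun _ => f, fun hfe j => ⟨hfe, rfl⟩, fun hf' => absurd hf' hf⟩
    choose sel h1 h2 using hchoice
    exact ⟨sel, fun e he j => h1 e he j, fun f hf => h2 f hf⟩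
  obtain ⟨sel, hsel1, hsel2⟩ := hsel
  set Q : Fin l → G.Walk s t :=
    fun j => Multigraph.Walk.rebuild (fun e => sel e j) (fun e he => hsel1 e he j) p with hQ
  have hQpath : ∀ j, (Q j).IsPath := by
    intro j
    show (Q j).support.Nodup
    rw [hQ]
    simp only
    rw [Multigraph.Walk.support_rebuild]
    exact hpPath
  have hQedges : ∀ j, (Q j).edges = p.edges.map (fun e => sel e j) :=
    fun j => Multigraph.Walk.edges_rebuild _ _ p
  have hQdisj : ∀ i j : Fin l, i ≠ j → EdgeDisjoint (Q i) (Q j) := by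
    intro i j hij e hei hej
    rw [hQedges] at hei hej
    obtain ⟨f, hf, hfe⟩ := List.mem_map.mp hei
    obtain ⟨f', hf', hfe'⟩ := List.mem_map.mp hej
    have hff' : G.ends f = G.ends f' := by
      have ha := (hsel1 f (Multigraph.Walk.edges_mem p f hf) i).2
      have hb := (hsel1 f' (Multigraph.Walk.edges_mem p f' hf') j).2
      rw [← ha, ← hb, hfe, hfe']
    have hkey : f = f' := Multigraph.Walk.edges_eq_of_ends_eq p hpPath f hf f' hf' hff'
    subst hkey
    have : sel f i = sel f j := by rw [hfe, hfe']
    exact hij (hsel2 f hf this)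
  have hcastinj : Function.Injective (Fin.cast (Nat.zero_add l)) := by
    intro a b hab
    have := congrArg Fin.val hab
    simp only [Fin.coe_cast] at this
    exact Fin.ext this
  refine ⟨fun j => Q (Fin.cast (Nat.zero_add l) j), fun j => hQpath _, ?_, ?_⟩
  · intro i j hij
    exact hQdisj _ _ (fun hc => hij (hcastinj hc))
  · refine ⟨{(⟨0, by omega⟩ : Fin (0 + l))}, by simp, ?_⟩
    intro i hi j hj hij
    rw [Finset.mem_singleton] at hi hj
    subst hi; subst hj
    exact absurd rfl hij
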